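/- Let H be a group with trivial center and A a finitely generated abelian group. Then the following are equivalent: (1) H × A has property FGFPa; (2) H has property FGFPa, and for every group homomorphism χ : H → ℝ (into the additive reals) whose image has torsion-free rank rk_ℤ(im χ) ≤ rk_ℤ(A), and for every automorphism ψ of H, the kernel of the restriction of χ to Fix ψ is finitely generated. (Case n = 1 of Theorem C of the paper.) -/

import Mathlib

/-- The subgroup of fixed points of an automorphism `φ` of `G`:
`Fix φ = {g ∈ G | φ(g) = g}`. -/
def fixedSubgroup {G : Type*} [Group G] (φ : G ≃* G) : Subgroup G where
  carrier := {g | φ g = g}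
  one_mem' := map_one φ
  mul_mem' := by
    intro a b ha hb
    simp only [Set.mem_setOf_eq, map_mul] at *
    rw [ha, hb]
  inv_mem' := by
    intro a ha
    simp only [Set.mem_setOf_eq, map_inv] at *
    rw [ha]

/-- A group `G` has property FGFPa if the fixed subgroup of every automorphism of `G`
is finitely generated. -/
def FGFPa (G : Type*) [Group G] : Prop :=
  ∀ φ : G ≃* G, Group.FG ↥(fixedSubgroup φ)

open scoped TensorProduct in
/-- The torsion-free rank `rk_ℤ` of a group: the dimension of the `ℚ`-vector space
`ℚ ⊗_ℤ M^{ab}`. For an abelian group this is the usual torsion-free rank. -/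
noncomputable def torsionFreeRank (M : Type*) [Group M] : ℕ :=
  Module.finrank ℚ (ℚ ⊗[ℤ] (Additive (Abelianization M)))


open scoped TensorProduct

namespace FGFPaAux

variable {X : Type*} [AddCommGroup X]

lemma exists_denom (z : ℚ ⊗[ℤ] X) :
    ∃ (n : ℕ) (x : X), n ≠ 0 ∧ z = ((n : ℚ)⁻¹) ⊗ₜ[ℤ] x := by
  induction z using TensorProduct.induction_on with
  | zero => exact ⟨1, 0, one_ne_zero, by simp⟩
  | tmul q x =>
      refine ⟨q.den, q.num • x, q.den_nz, ?_⟩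
      rw [← TensorProduct.smul_tmul]
      congr 1
      rw [zsmul_eq_mul]
      rw [mul_comm, ← div_eq_inv_mul, Rat.num_div_den]
  | add z w hz hw =>
      obtain ⟨a, x, ha, rfl⟩ := hz
      obtain ⟨b, y, hb, rfl⟩ := hw
      refine ⟨a * b, (b : ℤ) • x + (a : ℤ) • y, Nat.mul_ne_zero ha hb, ?_⟩
      rw [TensorProduct.tmul_add, ← TensorProduct.smul_tmul, ← TensorProduct.smul_tmul]
      congr 2
      · rw [zsmul_eq_mul]
        push_cast
        field_simp
      · rw [zsmul_eq_mul]
        push_cast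
        field_simp

lemma span_one_tmul_top :
    Submodule.span ℚ (Set.range (fun x : X => ((1:ℚ) ⊗ₜ[ℤ] x : ℚ ⊗[ℤ] X))) = ⊤ := by
  rw [eq_top_iff]
  rintro z -
  obtain ⟨n, x, hn, rfl⟩ := exists_denom z
  have : ((n : ℚ)⁻¹) ⊗ₜ[ℤ] x = (n : ℚ)⁻¹ • ((1:ℚ) ⊗ₜ[ℤ] x : ℚ ⊗[ℤ] X) := by
    rw [TensorProduct.smul_tmul', smul_eq_mul, mul_one]
  rw [this]
  exact Submodule.smul_mem _ _ (Submodule.subset_span ⟨x, rfl⟩)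

lemma finrank_tensor_le_of_injective {W : Type*} [AddCommGroup W] [Module ℚ W]
    [FiniteDimensional ℚ W] (f : X →ₗ[ℤ] W) (hf : Function.Injective f) :
    Module.finrank ℚ (ℚ ⊗[ℤ] X) ≤ Module.finrank ℚ W := by
  have hg : Function.Injective (f.liftBaseChange ℚ) := by
    intro z w hzw
    rw [← sub_eq_zero, ← map_sub] at hzw
    obtain ⟨n, x, hn, hx⟩ := exists_denom (z - w)
    rw [hx, LinearMap.liftBaseChange_tmul] at hzw
    have h0 : f x = 0 := by
      have hn' : ((n : ℚ)⁻¹) ≠ 0 := by positivity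
      exact (smul_eq_zero.mp hzw).resolve_left hn'
    have : x = 0 := hf (by simpa using h0)
    rw [← sub_eq_zero, hx, this, TensorProduct.tmul_zero]
  exact LinearMap.finrank_le_finrank_of_injective hg

lemma finrank_tensor_le_of_surjective {Y : Type*} [AddCommGroup Y] [Module.Finite ℤ X]
    (f : X →ₗ[ℤ] Y) (hf : Function.Surjective f) :
    Module.finrank ℚ (ℚ ⊗[ℤ] Y) ≤ Module.finrank ℚ (ℚ ⊗[ℤ] X) := by
  have hsurj : Function.Surjective (f.baseChange ℚ) :=
    LinearMap.lTensor_surjective ℚ hf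
  have : FiniteDimensional ℚ (ℚ ⊗[ℤ] X) := Module.Finite.base_change ℤ ℚ X
  calc Module.finrank ℚ (ℚ ⊗[ℤ] Y)
      = Module.finrank ℚ (⊤ : Submodule ℚ (ℚ ⊗[ℤ] Y)) := (finrank_top ℚ _).symm
    _ = Module.finrank ℚ (LinearMap.range (f.baseChange ℚ)) := by
        rw [LinearMap.range_eq_top.mpr hsurj]
    _ ≤ Module.finrank ℚ (ℚ ⊗[ℤ] X) := LinearMap.finrank_range_le _

/-- From `n ≤ finrank ℚ (ℚ ⊗ X)` produce `n` elements of `X` whose images `1 ⊗ xᵢ`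
are `ℚ`-linearly independent. -/
lemma exists_linIndep_tensor (n : ℕ) [FiniteDimensional ℚ (ℚ ⊗[ℤ] X)]
    (hn : n ≤ Module.finrank ℚ (ℚ ⊗[ℤ] X)) :
    ∃ a : Fin n → X, LinearIndependent ℚ (fun i => ((1:ℚ) ⊗ₜ[ℤ] a i : ℚ ⊗[ℤ] X)) := by
  classical
  obtain ⟨t, hts, hspan, hli⟩ :=
    exists_linearIndependent ℚ (Set.range (fun x : X => ((1:ℚ) ⊗ₜ[ℤ] x : ℚ ⊗[ℤ] X)))
  rw [span_one_tmul_top] at hspan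
  have htfin : t.Finite := hli.setFinite
  haveI : Fintype t := htfin.fintype
  have hb : Module.finrank ℚ (ℚ ⊗[ℤ] X) = Fintype.card t := by
    apply Module.finrank_eq_card_basis (Module.Basis.mk hli ?_)
    rw [Subtype.range_val, hspan]
  have hcard : n ≤ Fintype.card t := hb ▸ hn
  obtain ⟨emb⟩ := Function.Embedding.nonempty_of_card_le (α := Fin n) (β := t)
    (by simpa using hcard)
  have hchoice : ∀ i : Fin n, ∃ x : X, ((1:ℚ) ⊗ₜ[ℤ] x : ℚ ⊗[ℤ] X) = (emb i : ℚ ⊗[ℤ] X) := by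
    intro i
    obtain ⟨x, hx⟩ := hts (emb i).2
    exact ⟨x, hx⟩
  choose a ha using hchoice
  refine ⟨a, ?_⟩
  have : (fun i => ((1:ℚ) ⊗ₜ[ℤ] a i : ℚ ⊗[ℤ] X)) = (fun x : t => (x : ℚ ⊗[ℤ] X)) ∘ emb := by
    funext i; simp [ha i]
  rw [this]
  exact hli.comp emb emb.injective

/-- `ℚ`-linear independence of `1 ⊗ aᵢ` gives `ℤ`-linear independence of `aᵢ`. -/
lemma linIndep_int_of_tensor {ι : Type*} [Fintype ι] (a : ι → X)
    (h : LinearIndependent ℚ (fun i => ((1:ℚ) ⊗ₜ[ℤ] a i : ℚ ⊗[ℤ] X))) :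
    LinearIndependent ℤ a := by
  rw [Fintype.linearIndependent_iff]
  intro c hc i
  have h2 : ∑ j, (c j : ℚ) • ((1:ℚ) ⊗ₜ[ℤ] a j : ℚ ⊗[ℤ] X) = 0 := by
    have := congrArg (fun x : X => ((1:ℚ) ⊗ₜ[ℤ] x : ℚ ⊗[ℤ] X)) hc
    simp only [TensorProduct.tmul_sum, TensorProduct.tmul_zero] at this
    rw [← this]
    apply Finset.sum_congr rfl
    intro j _
    rw [Int.cast_smul_eq_zsmul, TensorProduct.tmul_smul]
  have := Fintype.linearIndependent_iff.mp h (fun j => (c j : ℚ)) h2 i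
  exact_mod_cast this

/-- A map defined on a free module by sending a basis to a `ℤ`-linearly independent family
is injective. -/
lemma constr_injective {F : Type*} [AddCommGroup F] {ι : Type*} [Fintype ι]
    (b : Module.Basis ι ℤ F) (a : ι → X) (ha : LinearIndependent ℤ a) :
    Function.Injective (b.constr ℤ a) := by
  intro u v huv
  rw [← sub_eq_zero, ← map_sub] at huv
  set w := u - v with hw
  have hsum : ∑ i, b.repr w i • a i = 0 := by
    rw [← huv, Module.Basis.constr_apply_fintype]
    rfl
  have hz : ∀ i, b.repr w i = 0 := Fintype.linearIndependent_iff.mp ha _ hsum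
  have : w = 0 := by
    have := b.sum_repr w
    simp only [hz, zero_smul, Finset.sum_const_zero] at this
    exact this.symm
  rwa [← sub_eq_zero]

/-- A subgroup of a finitely generated commutative group is finitely generated. -/
lemma subgroup_fg {A : Type*} [CommGroup A] [hA : Group.FG A] (K : Subgroup A) :
    Group.FG ↥K := by
  rw [Group.fg_iff_subgroup_fg, Subgroup.fg_iff_add_fg]
  haveI : AddGroup.FG (Additive A) := GroupFG.iff_add_fg.mp hA
  haveI : Module.Finite ℤ (Additive A) := Module.Finite.iff_addGroup_fg.mpr ‹_›
  haveI : IsNoetherian ℤ (Additive A) := isNoetherian_of_isNoetherianRing_of_finite ℤ _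
  have hfg : (AddSubgroup.toIntSubmodule K.toAddSubgroup).FG := IsNoetherian.noetherian _
  rw [Submodule.fg_iff_addSubgroup_fg, AddSubgroup.toIntSubmodule_toAddSubgroup] at hfg
  exact hfg

/-- Extension lemma: if kernel and range of a homomorphism are f.g., so is the domain. -/
lemma fg_of_ker_range {G G' : Type*} [Group G] [Group G'] (f : G →* G')
    (hk : Group.FG ↥f.ker) (hr : Group.FG ↥f.range) : Group.FG G := by
  classical
  obtain ⟨SK, hSK, hSKfin⟩ := Group.fg_iff.mp hk
  obtain ⟨SR, hSR, hSRfin⟩ := Group.fg_iff.mp hr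
  -- push to G and G'
  have hker : Subgroup.closure ((↑) '' SK : Set G) = f.ker := by
    have := congrArg (Subgroup.map f.ker.subtype) hSK
    rwa [MonoidHom.map_closure, ← MonoidHom.range_eq_map, Subgroup.range_subtype] at this
  have hrange : Subgroup.closure ((↑) '' SR : Set G') = f.range := by
    have := congrArg (Subgroup.map f.range.subtype) hSR
    rwa [MonoidHom.map_closure, ← MonoidHom.range_eq_map, Subgroup.range_subtype] at this
  -- choose lifts of the range generators
  have hlift : ∀ y : ↥f.range, ∃ g : G, f g = (y : G') := fun y => y.2
  choose lift hliftspec using hlift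
  set T : Set G := lift '' SR with hT
  refine Group.fg_iff.mpr ⟨((↑) '' SK : Set G) ∪ T, ?_, (hSKfin.image _).union (hSRfin.image _)⟩
  rw [eq_top_iff]
  intro g _
  have hfg' : f g ∈ Subgroup.map f (Subgroup.closure T) := by
    have himg : f '' T = ((↑) '' SR : Set G') := by
      rw [hT, Set.image_image]
      apply Set.image_congr
      intro y _
      exact hliftspec y
    rw [MonoidHom.map_closure, himg, hrange]
    exact ⟨g, rfl⟩
  obtain ⟨c, hc, hcg⟩ := hfg'
  have hgc : g * c⁻¹ ∈ f.ker := by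
    rw [MonoidHom.mem_ker, map_mul, map_inv, hcg, mul_inv_cancel]
  have h1 : g * c⁻¹ ∈ Subgroup.closure (((↑) '' SK : Set G) ∪ T) := by
    apply Subgroup.closure_mono Set.subset_union_left
    rw [hker]; exact hgc
  have h2 : c ∈ Subgroup.closure (((↑) '' SK : Set G) ∪ T) := by
    apply Subgroup.closure_mono Set.subset_union_right hc
  simpa using mul_mem h1 h2

/-- Kernel of a hom from an f.g. group into a finite group is f.g. -/
lemma fg_ker_of_finite {Q T : Type*} [Group Q] [Group.FG Q] [Group T] [Finite T]
    (m : Q →* T) : Group.FG ↥m.ker := by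
  haveI : Finite ↥m.range := Subgroup.instFiniteSubtypeMem m.range
  haveI := Subgroup.finiteIndex_ker m
  infer_instance

/-- An automorphism maps central elements to central elements. -/
lemma center_map {G : Type*} [Group G] (φ : G ≃* G) {g : G} (hg : g ∈ Subgroup.center G) :
    φ g ∈ Subgroup.center G := by
  rw [Subgroup.mem_center_iff] at hg ⊢
  intro x
  have : φ (φ.symm x * g) = φ (g * φ.symm x) := by rw [hg]
  simpa [map_mul] using this

lemma torsionFreeRank_eq_comm (M : Type*) [CommGroup M] :
    torsionFreeRank M = Module.finrank ℚ (ℚ ⊗[ℤ] Additive M) := by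
  unfold torsionFreeRank
  have e : Additive (Abelianization M) ≃+ Additive M :=
    MulEquiv.toAdditive (Abelianization.equivOfComm (H := M)).symm
  exact LinearEquiv.finrank_eq (e.toIntLinearEquiv.baseChange ℤ ℚ _ _)

end FGFPaAux

section MainAux
open FGFPaAux

lemma fixedSubgroup_refl (G : Type*) [Group G] :
    fixedSubgroup (MulEquiv.refl G) = ⊤ := by
  ext x; simp [fixedSubgroup]

lemma fg_of_fg_top {G : Type*} [Group G] (h : Group.FG ↥(⊤ : Subgroup G)) : Group.FG G :=
  @Group.fg_of_surjective _ _ _ _ h ((⊤ : Subgroup G).subtype)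
    (fun x => ⟨⟨x, trivial⟩, rfl⟩)

lemma fg_of_FGFPa {G : Type*} [Group G] (h : FGFPa G) : Group.FG G := by
  have := h (MulEquiv.refl G)
  rw [fixedSubgroup_refl] at this
  exact fg_of_fg_top this

end MainAux

open FGFPaAux in
set_option maxHeartbeats 1000000 in
theorem FGFPa_product_iff {H A : Type*} [Group H] [CommGroup A]
    (hZ : Subgroup.center H = ⊥) (hA : Group.FG A) :
    FGFPa (H × A) ↔
      (FGFPa H ∧
        ∀ (χ : H →* Multiplicative ℝ) (ψ : H ≃* H),
          torsionFreeRank ↥χ.range ≤ torsionFreeRank A →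
          Group.FG ↥(MonoidHom.ker (χ.comp (fixedSubgroup ψ).subtype))) := by
  constructor
  · intro hFG
    have hHA : Group.FG (H × A) := fg_of_FGFPa hFG
    have hHfg : FGFPa H := by
      intro ψ
      have hfix := hFG (ψ.prodCongr (MulEquiv.refl A))
      let F : ↥(fixedSubgroup (ψ.prodCongr (MulEquiv.refl A))) →* ↥(fixedSubgroup ψ) :=
        MonoidHom.mk' (fun x => ⟨x.val.1, congrArg Prod.fst x.2⟩) (fun x y => rfl)
      have hsurj : Function.Surjective F := by
        rintro ⟨h, hh⟩
        refine ⟨⟨(h, 1), ?_⟩, rfl⟩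
        show (ψ.prodCongr (MulEquiv.refl A)) (h, 1) = (h, 1)
        exact Prod.ext hh rfl
      exact @Group.fg_of_surjective _ _ _ _ hfix F hsurj
    refine ⟨hHfg, ?_⟩
    intro χ ψ hrk
    haveI hHg : Group.FG H := fg_of_FGFPa hHfg
    haveI : Group.FG ↥χ.range := Group.fg_range χ
    haveI : AddGroup.FG (Additive ↥χ.range) := GroupFG.iff_add_fg.mp ‹_›
    haveI : Module.Finite ℤ (Additive ↥χ.range) := Module.Finite.iff_addGroup_fg.mpr ‹_›
    -- the embedding of the range into ℝ
    let ν : Additive ↥χ.range →+ ℝ :=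
      AddMonoidHom.mk' (fun x => (x.toMul.val).toAdd) (fun x y => rfl)
    have hνinj : Function.Injective ν := by
      intro x y hxy
      apply Additive.toMul.injective
      apply Subtype.ext
      exact Multiplicative.toAdd.injective hxy
    haveI : NoZeroSMulDivisors ℤ (Additive ↥χ.range) := by
      constructor
      intro c x hcx
      rcases eq_or_ne c 0 with hc | hc
      · exact Or.inl hc
      · refine Or.inr ?_
        have h0 : c • ν x = 0 := by
          rw [← map_zsmul ν c x, hcx, map_zero]
        have : ν x = 0 := (smul_eq_zero.mp h0).resolve_left hc
        exact hνinj (by rw [this, map_zero])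
    haveI : Module.Free ℤ (Additive ↥χ.range) := Module.free_of_finite_type_torsion_free'
    set ι := Module.Free.ChooseBasisIndex ℤ (Additive ↥χ.range) with hι
    let b : Module.Basis ι ℤ (Additive ↥χ.range) := Module.Free.chooseBasis ℤ _
    haveI : AddGroup.FG (Additive A) := GroupFG.iff_add_fg.mp hA
    haveI : Module.Finite ℤ (Additive A) := Module.Finite.iff_addGroup_fg.mpr ‹_›
    haveI : FiniteDimensional ℚ (ℚ ⊗[ℤ] (Additive A)) := Module.Finite.base_change ℤ ℚ _
    have hcard : Fintype.card ι ≤ Module.finrank ℚ (ℚ ⊗[ℤ] (Additive A)) := by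
      have h1 : Fintype.card ι = torsionFreeRank ↥χ.range := by
        rw [torsionFreeRank_eq_comm]
        exact (Module.finrank_eq_card_basis (b.baseChange ℚ)).symm
      have h2 : torsionFreeRank A = Module.finrank ℚ (ℚ ⊗[ℤ] (Additive A)) :=
        torsionFreeRank_eq_comm A
      omega
    obtain ⟨a0, ha0⟩ := exists_linIndep_tensor (X := Additive A) (Fintype.card ι) hcard
    let e := Fintype.equivFin ι
    let a : ι → Additive A := fun i => a0 (e i)
    have ha : LinearIndependent ℚ (fun i => ((1:ℚ) ⊗ₜ[ℤ] a i : ℚ ⊗[ℤ] Additive A)) :=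
      ha0.comp e e.injective
    have haZ : LinearIndependent ℤ a := linIndep_int_of_tensor a ha
    let f : Additive ↥χ.range →ₗ[ℤ] Additive A := b.constr ℤ a
    have hfinj : Function.Injective f := constr_injective b a haZ
    let δ : H →* A :=
      MonoidHom.mk' (fun h => Additive.toMul (f (Additive.ofMul (χ.rangeRestrict h))))
        (by intro x y
            simp only [map_mul]
            rw [show Additive.ofMul (χ.rangeRestrict x * χ.rangeRestrict y)
                  = Additive.ofMul (χ.rangeRestrict x) + Additive.ofMul (χ.rangeRestrict y)
                from rfl, map_add]
            rfl)
    have hδ1 : ∀ h : H, δ h = 1 ↔ χ h = 1 := by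
      intro h
      constructor
      · intro hh
        have h1 : f (Additive.ofMul (χ.rangeRestrict h)) = 0 := hh
        have h2 : Additive.ofMul (χ.rangeRestrict h) = 0 := hfinj (by rw [h1, map_zero])
        have h3 : χ.rangeRestrict h = 1 := h2
        have h4 := congrArg Subtype.val h3
        simpa using h4
      · intro hh
        have h3 : χ.rangeRestrict h = 1 := Subtype.ext (by simpa using hh)
        show Additive.toMul (f (Additive.ofMul (χ.rangeRestrict h))) = 1
        rw [h3]
        show Additive.toMul (f 0) = 1
        rw [map_zero]
        rfl
    let φ : (H × A) ≃* (H × A) :=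
    { toFun := fun p => (ψ p.1, δ p.1 * p.2)
      invFun := fun p => (ψ.symm p.1, (δ (ψ.symm p.1))⁻¹ * p.2)
      left_inv := by
        intro p
        simp [inv_mul_cancel_left]
      right_inv := by
        intro p
        simp [inv_mul_cancel_left]
      map_mul' := by
        intro p q
        ext
        · simp [map_mul]
        · simp [map_mul]
          exact mul_mul_mul_comm _ _ _ _ }
    have hfix := hFG φ
    let K := (χ.comp (fixedSubgroup ψ).subtype).ker
    have hmemfix : ∀ p : H × A, p ∈ fixedSubgroup φ ↔ ψ p.1 = p.1 ∧ δ p.1 = 1 := by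
      intro p
      constructor
      · intro hp
        have h1 : (ψ p.1, δ p.1 * p.2) = p := hp
        have h2 := congrArg Prod.fst h1
        have h3 := congrArg Prod.snd h1
        simp only at h2 h3
        refine ⟨h2, ?_⟩
        have := mul_eq_right.mp h3
        exact this
      · rintro ⟨h1, h2⟩
        show (ψ p.1, δ p.1 * p.2) = p
        rw [h1, h2, one_mul]
    let G2 : ↥(fixedSubgroup φ) →* ↥K :=
      MonoidHom.mk'
        (fun x => ⟨⟨x.val.1, ((hmemfix x.val).mp x.2).1⟩, by
          have := ((hmemfix x.val).mp x.2).2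
          have hchi : χ x.val.1 = 1 := (hδ1 _).mp this
          simpa [K, MonoidHom.mem_ker] using hchi⟩)
        (fun x y => rfl)
    have hG2surj : Function.Surjective G2 := by
      rintro ⟨⟨h, hh⟩, hk⟩
      have hchi : χ h = 1 := by simpa [K, MonoidHom.mem_ker] using hk
      have hd : δ h = 1 := (hδ1 h).mpr hchi
      refine ⟨⟨(h, 1), (hmemfix (h, 1)).mpr ⟨hh, hd⟩⟩, rfl⟩
    exact @Group.fg_of_surjective _ _ _ _ hfix G2 hG2surj
  · rintro ⟨hH, hker⟩
    intro φ
    haveI hAfg : Group.FG A := hA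
    have hcent : ∀ p : H × A, p ∈ Subgroup.center (H × A) ↔ p.1 ∈ Subgroup.center H := by
      intro p
      simp only [Subgroup.mem_center_iff]
      constructor
      · intro hp h
        exact (Prod.ext_iff.mp (hp (h, 1))).1
      · intro hp q
        exact Prod.ext (hp q.1) (mul_comm q.2 p.2)
    have hone : ∀ a : A, (φ (1, a)).1 = 1 := by
      intro a
      have hmem : ((1:H), a) ∈ Subgroup.center (H × A) :=
        (hcent _).mpr (Subgroup.one_mem _)
      have h1 := (hcent _).mp (center_map φ hmem)
      rwa [hZ, Subgroup.mem_bot] at h1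
    set σ0 : H →* H := (MonoidHom.fst H A).comp (φ.toMonoidHom.comp (MonoidHom.inl H A)) with hσ0
    set δ : H →* A := (MonoidHom.snd H A).comp (φ.toMonoidHom.comp (MonoidHom.inl H A)) with hδd
    set α : A →* A := (MonoidHom.snd H A).comp (φ.toMonoidHom.comp (MonoidHom.inr H A)) with hαd
    have hφ : ∀ h a, φ (h, a) = (σ0 h, δ h * α a) := by
      intro h a
      have hsplit : ((h, a) : H × A) = (h, 1) * (1, a) := by simp
      rw [hsplit, map_mul]
      have h1 : φ (h, 1) = (σ0 h, δ h) := rfl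
      have h4 : φ ((1 : H), a) = (1, α a) := Prod.ext (hone a) rfl
      rw [h1, h4, Prod.mk_mul_mk, mul_one]
    have hφ' : ∀ p : H × A, φ p = (σ0 p.1, δ p.1 * α p.2) := by
      intro p
      rw [← Prod.mk.eta (p := p), hφ p.1 p.2]
    have hσinj : Function.Injective σ0 := by
      intro x y hxy
      have h1 : σ0 (x * y⁻¹) = 1 := by rw [map_mul, map_inv, hxy, mul_inv_cancel]
      have h2 : (φ (x * y⁻¹, 1)).1 ∈ Subgroup.center H := by
        rw [hφ']
        simpa [h1] using Subgroup.one_mem (Subgroup.center H)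
      have h2' : φ (x * y⁻¹, 1) ∈ Subgroup.center (H × A) := (hcent _).mpr h2
      have h3 : x * y⁻¹ ∈ Subgroup.center H := by
        have h4 := center_map φ.symm h2'
        rw [MulEquiv.symm_apply_apply] at h4
        exact (hcent _).mp h4
      rw [hZ, Subgroup.mem_bot] at h3
      exact mul_inv_eq_one.mp h3
    have hσsurj : Function.Surjective σ0 := by
      intro h'
      obtain ⟨p, hp⟩ := φ.surjective (h', 1)
      refine ⟨p.1, ?_⟩
      have h5 := congrArg Prod.fst (hφ' p)
      rw [hp] at h5
      exact h5.symm
    let σ : H ≃* H := MulEquiv.ofBijective σ0 ⟨hσinj, hσsurj⟩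
    have hmemfix : ∀ p : H × A, p ∈ fixedSubgroup φ ↔ σ0 p.1 = p.1 ∧ δ p.1 * α p.2 = p.2 := by
      intro p
      show φ p = p ↔ _
      rw [hφ' p, Prod.ext_iff]
    let β : A →* A := MonoidHom.mk' (fun a => a * (α a)⁻¹)
      (by intro x y
          show x * y * (α (x * y))⁻¹ = (x * (α x)⁻¹) * (y * (α y)⁻¹)
          rw [map_mul, mul_inv]
          exact mul_mul_mul_comm _ _ _ _)
    set B : Subgroup A := β.range with hB
    set π : A →* A ⧸ B := QuotientGroup.mk' B with hπ
    set δbar : H →* A ⧸ B := π.comp δ with hδbar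
    set P : Subgroup ↥(fixedSubgroup σ) := (δbar.comp (fixedSubgroup σ).subtype).ker with hP
    -- ====== core: P is finitely generated ======
    have hPfg : Group.FG ↥P := by
      haveI : Group.FG (A ⧸ B) := Group.fg_of_surjective (QuotientGroup.mk'_surjective B)
      haveI : AddGroup.FG (Additive (A ⧸ B)) := GroupFG.iff_add_fg.mp ‹_›
      haveI : Module.Finite ℤ (Additive (A ⧸ B)) := Module.Finite.iff_addGroup_fg.mpr ‹_›
      haveI : IsNoetherian ℤ (Additive (A ⧸ B)) := isNoetherian_of_isNoetherianRing_of_finite ℤ _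
      set Tor := Submodule.torsion ℤ (Additive (A ⧸ B)) with hTordef
      haveI hTorFG : AddGroup.FG ↥Tor := Module.Finite.iff_addGroup_fg.mp inferInstance
      haveI hTorFin : Finite ↥Tor :=
        AddCommGroup.finite_of_fg_torsion ↥Tor
          (AddMonoid.isTorsion_iff_isTorsion_int.mpr (Submodule.torsion_isTorsion))
      set M2 := Additive (A ⧸ B) ⧸ Tor with hM2
      haveI : Module.Finite ℤ M2 :=
        Module.Finite.of_surjective Tor.mkQ (Submodule.mkQ_surjective Tor)
      haveI : Module.Free ℤ M2 := Module.free_of_finite_type_torsion_free'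
      set ι2 := Module.Free.ChooseBasisIndex ℤ M2 with hι2
      let b2 : Module.Basis ι2 ℤ M2 := Module.Free.chooseBasis ℤ M2
      obtain ⟨r, hr⟩ : ∃ r : ι2 → ℝ, LinearIndependent ℚ r := by
        have hcard : ((Fintype.card ι2 : ℕ) : Cardinal) ≤ Module.rank ℚ ℝ := by
          rw [Real.rank_rat_real]
          exact (Cardinal.nat_lt_continuum _).le
        obtain ⟨s, hs, hli⟩ := le_rank_iff_exists_linearIndependent_finset.mp hcard
        let e : ι2 ≃ ↥(s : Finset ℝ) := Fintype.equivOfCardEq (by rw [Fintype.card_coe, hs])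
        exact ⟨fun i => (e i : ℝ), hli.comp e e.injective⟩
      have hrZ : LinearIndependent ℤ r := hr.restrict_scalars (by
        intro x y hxy
        have : ((x : ℚ)) = (y : ℚ) := by simpa using hxy
        exact_mod_cast this)
      let j : M2 →ₗ[ℤ] ℝ := b2.constr ℤ r
      have hjinj : Function.Injective j := constr_injective b2 r hrZ
      let χ0 : H →* Multiplicative ℝ :=
        MonoidHom.mk' (fun h => Multiplicative.ofAdd (j (Tor.mkQ (Additive.ofMul (δbar h)))))
          (by intro x y
              rw [show Additive.ofMul (δbar (x*y))
                    = Additive.ofMul (δbar x) + Additive.ofMul (δbar y) from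
                  by rw [show δbar (x*y) = δbar x * δbar y from map_mul δbar x y]; rfl,
                map_add, map_add]
              rfl)
      set W := Submodule.span ℚ (Set.range r) with hWdef
      haveI : FiniteDimensional ℚ ↥W := FiniteDimensional.span_of_finite ℚ (Set.finite_range r)
      have hjW : ∀ z : M2, j z ∈ W := by
        intro z
        have hz : j z = ∑ i, b2.repr z i • r i := by
          rw [Module.Basis.constr_apply_fintype]
          rfl
        rw [hz]
        exact Submodule.sum_mem _ (fun i _ =>
          Submodule.smul_of_tower_mem _ _ (Submodule.subset_span ⟨i, rfl⟩))
      have hrkχ : torsionFreeRank ↥χ0.range ≤ torsionFreeRank A := by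
        rw [torsionFreeRank_eq_comm, torsionFreeRank_eq_comm]
        have hmemW : ∀ x : ↥χ0.range, (x.val).toAdd ∈ W := by
          rintro ⟨x, h, rfl⟩
          exact hjW _
        let ν2 : Additive ↥χ0.range →+ ↥W :=
          AddMonoidHom.mk' (fun x => ⟨(x.toMul.val).toAdd, hmemW x.toMul⟩) (fun x y => rfl)
        have hν2 : Function.Injective ν2 := by
          intro x y hxy
          have h6 := congrArg Subtype.val hxy
          exact Additive.toMul.injective (Subtype.ext (Multiplicative.toAdd.injective h6))
        have h1 : Module.finrank ℚ (ℚ ⊗[ℤ] Additive ↥χ0.range) ≤ Module.finrank ℚ ↥W :=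
          finrank_tensor_le_of_injective ν2.toIntLinearMap hν2
        have h2 : Module.finrank ℚ ↥W ≤ Fintype.card ι2 := by
          classical
          calc Module.finrank ℚ ↥W ≤ (Set.range r).toFinset.card := finrank_span_le_card _
          _ ≤ Fintype.card ι2 := by
            rw [Set.toFinset_range]
            exact Finset.card_image_le.trans (by simp)
        haveI : AddGroup.FG (Additive A) := GroupFG.iff_add_fg.mp hA
        haveI : Module.Finite ℤ (Additive A) := Module.Finite.iff_addGroup_fg.mpr ‹_›
        have h3 : Fintype.card ι2 = Module.finrank ℚ (ℚ ⊗[ℤ] M2) :=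
          (Module.finrank_eq_card_basis (b2.baseChange ℚ)).symm
        have h4 : Module.finrank ℚ (ℚ ⊗[ℤ] M2)
            ≤ Module.finrank ℚ (ℚ ⊗[ℤ] Additive (A ⧸ B)) :=
          finrank_tensor_le_of_surjective Tor.mkQ (Submodule.mkQ_surjective Tor)
        have h5 : Module.finrank ℚ (ℚ ⊗[ℤ] Additive (A ⧸ B))
            ≤ Module.finrank ℚ (ℚ ⊗[ℤ] Additive A) := by
          refine finrank_tensor_le_of_surjective
            (MonoidHom.toAdditive π).toIntLinearMap ?_
          intro y
          obtain ⟨x, hx⟩ := QuotientGroup.mk'_surjective B y.toMul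
          exact ⟨Additive.ofMul x, congrArg Additive.ofMul hx⟩
        omega
      have hQfg := hker χ0 σ hrkχ
      set Q := (χ0.comp (fixedSubgroup σ).subtype).ker with hQ
      have hPQ : P ≤ Q := by
        intro x hx
        have hx' : δbar x.val = 1 := hx
        show χ0 x.val = 1
        have heq : χ0 x.val
            = Multiplicative.ofAdd (j (Tor.mkQ (Additive.ofMul (1 : A ⧸ B)))) :=
          congrArg (fun z : A ⧸ B => Multiplicative.ofAdd (j (Tor.mkQ (Additive.ofMul z)))) hx'
        rw [heq, show Additive.ofMul (1 : A ⧸ B) = 0 from rfl, map_zero, map_zero]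
        rfl
      have htor : ∀ q : ↥(fixedSubgroup σ), q ∈ Q → Additive.ofMul (δbar q.val) ∈ Tor := by
        intro q hq
        have h1 : j (Tor.mkQ (Additive.ofMul (δbar q.val))) = 0 := hq
        have h2 : Tor.mkQ (Additive.ofMul (δbar q.val)) = 0 := hjinj (by rw [h1, map_zero])
        rw [Submodule.mkQ_apply] at h2
        rwa [Submodule.Quotient.mk_eq_zero] at h2
      let m : ↥Q →* Multiplicative ↥Tor :=
        MonoidHom.mk'
          (fun q => Multiplicative.ofAdd
            (⟨Additive.ofMul (δbar q.val.val), htor q.val q.2⟩ : ↥Tor))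
          (by intro x y
              refine congrArg Multiplicative.ofAdd (Subtype.ext ?_)
              show Additive.ofMul (δbar ((x * y : ↥Q) : ↥(fixedSubgroup σ)).val)
                  = Additive.ofMul (δbar x.val.val) + Additive.ofMul (δbar y.val.val)
              rw [show (((x * y : ↥Q) : ↥(fixedSubgroup σ)).val)
                    = x.val.val * y.val.val from rfl,
                show δbar (x.val.val * y.val.val) = δbar x.val.val * δbar y.val.val from
                  map_mul δbar _ _]
              rfl)
      haveI : Finite (Multiplicative ↥Tor) := hTorFin
      haveI : Group.FG ↥Q := hQfg
      have hmker : Group.FG ↥m.ker := fg_ker_of_finite m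
      have hkerm : m.ker = P.subgroupOf Q := by
        ext q
        rw [MonoidHom.mem_ker, Subgroup.mem_subgroupOf]
        constructor
        · intro h1
          have h2 := congrArg (fun z : Multiplicative ↥Tor => (z.toAdd : Additive (A ⧸ B))) h1
          have h3 : Additive.ofMul (δbar q.val.val) = 0 := h2
          show δbar q.val.val = 1
          exact h3
        · intro h1
          have h3 : δbar q.val.val = 1 := h1
          have : (⟨Additive.ofMul (δbar q.val.val), htor q.val q.2⟩ : ↥Tor) = 0 :=
            Subtype.ext h3
          show Multiplicative.ofAdd (⟨Additive.ofMul (δbar q.val.val), htor q.val q.2⟩ : ↥Tor) = 1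
          rw [this]
          rfl
      rw [hkerm] at hmker
      have hsurj2 : Function.Surjective ⇑(Subgroup.subgroupOfEquivOfLe hPQ).toMonoidHom :=
        (Subgroup.subgroupOfEquivOfLe hPQ).surjective
      exact @Group.fg_of_surjective _ _ _ _ hmker _ hsurj2
    -- ====== conclude ======
    let F : ↥(fixedSubgroup φ) →* ↥(fixedSubgroup σ) :=
      MonoidHom.mk' (fun x => ⟨x.val.1, ((hmemfix x.val).mp x.2).1⟩) (fun x y => rfl)
    have hrangeF : F.range = P := by
      ext h
      constructor
      · rintro ⟨x, rfl⟩
        have h2 := ((hmemfix x.val).mp x.2).2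
        have h3 : δ x.val.1 = β x.val.2 := by
          show δ x.val.1 = x.val.2 * (α x.val.2)⁻¹
          exact eq_mul_inv_iff_mul_eq.mpr h2
        show δbar x.val.1 = 1
        show π (δ x.val.1) = 1
        rw [h3]

        exact (QuotientGroup.eq_one_iff _).mpr ⟨x.val.2, rfl⟩
      · intro hh
        have h1 : δ h.val ∈ B := by
          have h0 : δbar h.val = 1 := hh
          exact (QuotientGroup.eq_one_iff _).mp h0
        obtain ⟨aa, haa⟩ := h1
        refine ⟨⟨(h.val, aa), (hmemfix _).mpr ⟨h.2, ?_⟩⟩, Subtype.ext rfl⟩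
        rw [← haa]
        show aa * (α aa)⁻¹ * α aa = aa
        rw [inv_mul_cancel_right]
    have hkerF : Group.FG ↥F.ker := by
      have hbker : Group.FG ↥β.ker := subgroup_fg β.ker
      have hs : ∀ a : ↥β.ker, ((1:H), a.val) ∈ fixedSubgroup φ := by
        intro a
        refine (hmemfix _).mpr ⟨by rw [map_one], ?_⟩
        have h5 : a.val * (α a.val)⁻¹ = 1 := a.2
        have h6 : α a.val = a.val := by
          have := mul_inv_eq_one.mp h5
          exact this.symm
        rw [map_one, one_mul, h6]
      let s : ↥β.ker →* ↥F.ker :=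
        MonoidHom.mk'
          (fun a => ⟨⟨((1:H), a.val), hs a⟩, Subtype.ext rfl⟩)
          (fun x y => by
            apply Subtype.ext
            apply Subtype.ext
            show ((1:H), x.val * y.val) = ((1:H), x.val) * ((1:H), y.val)
            rw [Prod.mk_mul_mk, one_mul])
      have hssurj : Function.Surjective s := by
        rintro ⟨x, hx⟩
        have h7 : x.val.1 = 1 := by
          have := congrArg Subtype.val hx
          exact this
        have h8 := ((hmemfix x.val).mp x.2).2
        rw [h7, map_one, one_mul] at h8
        have h9 : x.val.2 ∈ β.ker := by
          show x.val.2 * (α x.val.2)⁻¹ = 1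
          rw [h8, mul_inv_cancel]
        refine ⟨⟨x.val.2, h9⟩, ?_⟩
        apply Subtype.ext
        apply Subtype.ext
        show ((1:H), x.val.2) = x.val
        exact Prod.ext h7.symm rfl
      exact @Group.fg_of_surjective _ _ _ _ hbker s hssurj
    have hrfg : Group.FG ↥F.range := by rw [hrangeF]; exact hPfg
    exact fg_of_ker_range F hkerF hrfg
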